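/- X is G-sequentially locally connected if and only if for every G-sequentially open subset A of X, every G-sequentially connected component of A is G-sequentially open in X. -/

import Mathlib

open Filter Topology Pointwise

/-- A method of sequential convergence on an additive group `X`: an additive
function defined on a subgroup of the group of `X`-valued sequences. -/
structure SeqMethod (X : Type*) [AddGroup X] where
  dom : AddSubgroup (ℕ → X)
  toFun : dom →+ X

namespace SeqMethod

variable {X : Type*} [AddGroup X]

/-- `s` G-converges to `l`. -/
def Converges (M : SeqMethod X) (s : ℕ → X) (l : X) : Prop :=
  ∃ h : s ∈ M.dom, M.toFun ⟨s, h⟩ = l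

/-- The G-sequential closure of `A`. -/
def GClosure (M : SeqMethod X) (A : Set X) : Set X :=
  {l | ∃ s : ℕ → X, (∀ n, s n ∈ A) ∧ M.Converges s l}

/-- `A` is G-sequentially closed. -/
def GClosed (M : SeqMethod X) (A : Set X) : Prop := M.GClosure A ⊆ A

/-- `A` is G-sequentially open. -/
def GOpen (M : SeqMethod X) (A : Set X) : Prop := M.GClosed Aᶜ

/-- `M` is regular: every convergent sequence G-converges to its limit. -/
def Regular [TopologicalSpace X] (M : SeqMethod X) : Prop :=
  ∀ (s : ℕ → X) (l : X), Tendsto s atTop (𝓝 l) → M.Converges s l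

/-- `A` is G-sequentially connected: `A` is nonempty and there are no nonempty
disjoint G-sequentially closed subsets of `X`, each meeting `A`, covering `A`. -/
def GConnected (M : SeqMethod X) (A : Set X) : Prop :=
  A.Nonempty ∧ ¬ ∃ U V : Set X, M.GClosed U ∧ M.GClosed V ∧
    (U ∩ A).Nonempty ∧ (V ∩ A).Nonempty ∧ Disjoint U V ∧ A ⊆ U ∪ V

/-- The G-sequentially connected component of `x` inside a subset `A`. -/
def ComponentIn (M : SeqMethod X) (A : Set X) (x : X) : Set X :=
  ⋃₀ {C : Set X | x ∈ C ∧ C ⊆ A ∧ M.GConnected C}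

/-- The G-sequentially connected component of `x` in `X`. -/
def Component (M : SeqMethod X) (x : X) : Set X :=
  ⋃₀ {C : Set X | x ∈ C ∧ M.GConnected C}

/-- `f` is G-sequentially continuous on `X`. -/
def GCont (M : SeqMethod X) (f : X → X) : Prop :=
  ∀ (s : ℕ → X) (u : X), M.Converges s u → M.Converges (fun n => f (s n)) (f u)

/-- `f` is G-sequentially continuous on the subset `A`. -/
def GContOn (M : SeqMethod X) (f : X → X) (A : Set X) : Prop :=
  ∀ (s : ℕ → X) (u : X), (∀ n, s n ∈ A) → u ∈ A →
    M.Converges s u → M.Converges (fun n => f (s n)) (f u)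

/-- `F` is G-sequentially closed in `A`. -/
def GClosedIn (M : SeqMethod X) (A F : Set X) : Prop :=
  ∃ U : Set X, M.GClosed U ∧ F = U ∩ A

/-- `V` is G-sequentially open in `A`. -/
def GOpenIn (M : SeqMethod X) (A V : Set X) : Prop :=
  V ⊆ A ∧ M.GClosedIn A (A \ V)

/-- The set of G-sequentially connected components of points of `A`. -/
def pi0 (M : SeqMethod X) (A : Set X) : Set (Set X) :=
  {C : Set X | ∃ x ∈ A, C = M.ComponentIn A x}

/-- `X` is G-sequentially locally connected. -/
def GLocConn (M : SeqMethod X) : Prop :=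
  ∀ (x : X) (U : Set X), M.GOpen U → x ∈ U →
    ∃ V : Set X, M.GConnected V ∧ (∃ O : Set X, M.GOpen O ∧ x ∈ O ∧ O ⊆ V) ∧
      x ∈ V ∧ V ⊆ U

/-- A subset `A` is G-sequentially locally connected (with the relative
G-sequentially open sets). -/
def GLocConnOn (M : SeqMethod X) (A : Set X) : Prop :=
  ∀ a ∈ A, ∀ U : Set X, M.GOpenIn A U → a ∈ U →
    ∃ V : Set X, M.GConnected V ∧ (∃ O : Set X, M.GOpenIn A O ∧ a ∈ O ∧ O ⊆ V) ∧
      a ∈ V ∧ V ⊆ U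

end SeqMethod

open SeqMethod

variable {X : Type*} [AddGroup X] [TopologicalSpace X] [IsTopologicalAddGroup X]
  [FirstCountableTopology X] [T2Space X]

theorem SeqMethod.gOpen_of_nbhds {M : SeqMethod X} {B : Set X}
    (h : ∀ y ∈ B, ∃ O, M.GOpen O ∧ y ∈ O ∧ O ⊆ B) : M.GOpen B := by
  intro l hl hlB
  obtain ⟨s, hs, hconv⟩ := hl
  obtain ⟨O, hO, hlO, hOB⟩ := h l hlB
  exact hO ⟨s, fun n h' => hs n (hOB h'), hconv⟩ hlO

theorem SeqMethod.gConnected_singleton (M : SeqMethod X) (x : X) :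
    M.GConnected {x} := by
  refine ⟨⟨x, rfl⟩, ?_⟩
  rintro ⟨U, V, _, _, ⟨u, huU, hu'⟩, ⟨v, hvV, hv'⟩, hd, _⟩
  rw [Set.mem_singleton_iff] at hu' hv'
  subst hu'; subst hv'
  exact Set.disjoint_left.mp hd huU hvV

theorem SeqMethod.gConnected_sUnion (M : SeqMethod X) {S : Set (Set X)} {x : X}
    (hx : ∀ C ∈ S, x ∈ C) (hconn : ∀ C ∈ S, M.GConnected C)
    (hne : (⋃₀ S).Nonempty) : M.GConnected (⋃₀ S) := by
  refine ⟨hne, ?_⟩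
  rintro ⟨U, V, hU, hV, ⟨u, huU, C₁, hC₁S, huC₁⟩, ⟨v, hvV, C₂, hC₂S, hvC₂⟩, hd, hcov⟩
  have key : ∀ (W W' : Set X), M.GClosed W → M.GClosed W' → Disjoint W W' →
      x ∈ W → ∀ C ∈ S, C ⊆ W ∪ W' → C ⊆ W := by
    intro W W' hW hW' hd' hxW C hCS hsub
    by_contra hns
    obtain ⟨c, hcC, hcW⟩ := Set.not_subset.mp hns
    have hcW' : c ∈ W' := (hsub hcC).resolve_left hcW
    exact (hconn C hCS).2 ⟨W, W', hW, hW', ⟨x, hxW, hx C hCS⟩, ⟨c, hcW', hcC⟩, hd', hsub⟩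
  have hxUV : x ∈ U ∪ V := hcov ⟨C₁, hC₁S, hx _ hC₁S⟩
  cases hxUV with
  | inl hxW =>
    have hsub : ∀ C ∈ S, C ⊆ U := fun C hCS =>
      key U V hU hV hd hxW C hCS (fun y hy => hcov ⟨C, hCS, hy⟩)
    exact Set.disjoint_left.mp hd (hsub C₂ hC₂S hvC₂) hvV
  | inr hxW =>
    have hsub : ∀ C ∈ S, C ⊆ V := fun C hCS =>
      key V U hV hU hd.symm hxW C hCS
        (fun y hy => (Set.union_comm U V ▸ hcov ⟨C, hCS, hy⟩))
    exact Set.disjoint_left.mp hd huU (hsub C₁ hC₁S huC₁)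

theorem gLocConn_iff_components_of_gOpen_gOpen (M : SeqMethod X) :
    M.GLocConn ↔
      ∀ A : Set X, M.GOpen A → ∀ x ∈ A, M.GOpen (M.ComponentIn A x) := by
  constructor
  · intro hloc A hA x _
    apply SeqMethod.gOpen_of_nbhds
    intro y hy
    obtain ⟨C, ⟨hxC, hCA, hCconn⟩, hyC⟩ := hy
    obtain ⟨V, hVconn, ⟨O, hO, hyO, hOV⟩, hyV, hVA⟩ := hloc y A hA (hCA hyC)
    refine ⟨O, hO, hyO, fun z hz => ?_⟩
    refine ⟨C ∪ V, ⟨Or.inl hxC, Set.union_subset hCA hVA, ?_⟩, Or.inr (hOV hz)⟩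
    have hconn := M.gConnected_sUnion (S := {C, V}) (x := y)
      (by rintro D (rfl | rfl); exacts [hyC, hyV])
      (by rintro D (rfl | rfl); exacts [hCconn, hVconn])
      ⟨y, C, Or.inl rfl, hyC⟩
    simpa [Set.sUnion_pair] using hconn
  · intro h x U hU hxU
    have hxcomp : x ∈ M.ComponentIn U x :=
      ⟨{x}, ⟨rfl, by simpa using hxU, M.gConnected_singleton x⟩, rfl⟩
    refine ⟨M.ComponentIn U x, ?_, ⟨M.ComponentIn U x, h U hU x hxU, hxcomp,
      le_refl _⟩, hxcomp, Set.sUnion_subset fun C hC => hC.2.1⟩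
    exact M.gConnected_sUnion (fun C hC => hC.1) (fun C hC => hC.2.2) ⟨x, hxcomp⟩
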